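/- Let K be a number field of degree n > 1 and let k be the positive integer such that the image of the trace map tr_{K/ℚ} on the ring of integers O_K equals kℤ. Then the determinant of the trace pairing restricted to the trace-zero submodule O_K^0 = {x ∈ O_K : tr(x) = 0} equals (n/k²)·Disc(K). -/

import Mathlib

open NumberField

/-- The determinant of the trace pairing restricted to the trace-zero submodule
`O_K^0` equals `(n / k²) · Disc(K)`, where `tr_{K/ℚ}(O_K) = kℤ`. -/
theorem stmt_0 (K : Type*) [Field K] [NumberField K]
    (n : ℕ) (hn : 1 < n) (hdeg : Module.finrank ℚ K = n)
    (k : ℕ) (hk : 0 < k)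
    (htr : LinearMap.range (Algebra.trace ℤ (𝓞 K)) = Ideal.span {(k : ℤ)})
    (b : Module.Basis (Fin (n - 1)) ℤ (LinearMap.ker (Algebra.trace ℤ (𝓞 K)))) :
    (((Matrix.of fun i j =>
        Algebra.trace ℤ (𝓞 K) ((b i : 𝓞 K) * (b j : 𝓞 K))).det : ℤ) : ℚ)
      = (n : ℚ) / (k : ℚ) ^ 2 * (NumberField.discr K : ℚ) := by
  classical
  set D : Matrix (Fin (n - 1)) (Fin (n - 1)) ℤ :=
    Matrix.of fun i j => Algebra.trace ℤ (𝓞 K) ((b i : 𝓞 K) * (b j : 𝓞 K)) with hD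
  have hk0 : (k : ℤ) ≠ 0 := Int.natCast_ne_zero.mpr hk.ne'
  -- an element of trace k
  have hkmem : (k : ℤ) ∈ LinearMap.range (Algebra.trace ℤ (𝓞 K)) := by
    rw [htr]; exact Ideal.mem_span_singleton_self _
  obtain ⟨x, hx⟩ := hkmem
  have hdvd : ∀ y : 𝓞 K, (k : ℤ) ∣ (Algebra.trace ℤ (𝓞 K)) y := fun y => by
    have h1 : (Algebra.trace ℤ (𝓞 K)) y ∈ LinearMap.range (Algebra.trace ℤ (𝓞 K)) := ⟨y, rfl⟩
    rw [htr] at h1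
    rwa [Ideal.mem_span_singleton] at h1
  -- the "trace divided by k" linear map
  let m : 𝓞 K →ₗ[ℤ] ℤ :=
    { toFun := fun y => (Algebra.trace ℤ (𝓞 K)) y / k
      map_add' := fun y z => by
        obtain ⟨a, ha⟩ := hdvd y; obtain ⟨c, hc⟩ := hdvd z
        simp only [map_add, ha, hc, ← mul_add, Int.mul_ediv_cancel_left _ hk0]
      map_smul' := fun r y => by
        obtain ⟨a, ha⟩ := hdvd y
        simp only [map_smul, smul_eq_mul, RingHom.id_apply, ha]
        rw [show (r : ℤ) * ((k : ℤ) * a) = (k : ℤ) * (r * a) by ring,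
          Int.mul_ediv_cancel_left _ hk0, Int.mul_ediv_cancel_left _ hk0] }
  have hm_apply : ∀ y : 𝓞 K, m y = (Algebra.trace ℤ (𝓞 K)) y / k := fun _ => rfl
  have hsub : ∀ y : 𝓞 K, (Algebra.trace ℤ (𝓞 K)) (y - m y • x) = 0 := fun y => by
    rw [map_sub, map_smul, hx, smul_eq_mul, hm_apply, Int.ediv_mul_cancel (hdvd y), sub_self]
  let ψ : (ℤ × LinearMap.ker (Algebra.trace ℤ (𝓞 K))) →ₗ[ℤ] 𝓞 K :=
    LinearMap.coprod (LinearMap.toSpanSingleton ℤ (𝓞 K) x) (LinearMap.ker (Algebra.trace ℤ (𝓞 K))).subtype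
  let φ : 𝓞 K →ₗ[ℤ] (ℤ × LinearMap.ker (Algebra.trace ℤ (𝓞 K))) :=
    m.prod (LinearMap.codRestrict (LinearMap.ker (Algebra.trace ℤ (𝓞 K)))
      (LinearMap.id - (LinearMap.toSpanSingleton ℤ (𝓞 K) x).comp m)
      (fun y => LinearMap.mem_ker.mpr (hsub y)))
  have hψ : ∀ p : ℤ × LinearMap.ker (Algebra.trace ℤ (𝓞 K)), ψ p = p.1 • x + (p.2 : 𝓞 K) := fun p => rfl
  have hφ1 : ∀ y : 𝓞 K, (φ y).1 = m y := fun y => rfl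
  have hφ2 : ∀ y : 𝓞 K, ((φ y).2 : 𝓞 K) = y - m y • x := fun y => rfl
  let E : (ℤ × LinearMap.ker (Algebra.trace ℤ (𝓞 K))) ≃ₗ[ℤ] 𝓞 K :=
    LinearEquiv.ofLinear ψ φ
      (LinearMap.ext fun y => by
        show ψ (φ y) = y
        rw [hψ, hφ1, hφ2]; abel)
      (LinearMap.ext fun p => by
        show φ (ψ p) = p
        obtain ⟨a, z⟩ := p
        have hz : (Algebra.trace ℤ (𝓞 K)) (z : 𝓞 K) = 0 := z.2
        have h1 : (Algebra.trace ℤ (𝓞 K)) (a • x + (z : 𝓞 K)) = a * k := by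
          rw [map_add, map_smul, hx, hz, add_zero, smul_eq_mul]
        have hma : m (a • x + (z : 𝓞 K)) = a := by
          rw [hm_apply, h1, Int.mul_ediv_cancel _ hk0]
        refine Prod.ext ?_ (Subtype.ext ?_)
        · rw [hψ, hφ1]; exact hma
        · rw [hψ, hφ2]
          simp only
          rw [hma]; abel)
  let B : Module.Basis (Unit ⊕ Fin (n - 1)) ℤ (𝓞 K) := ((Module.Basis.singleton Unit ℤ).prod b).map E
  have hB1 : B (Sum.inl ()) = x := by
    simp only [B, Module.Basis.map_apply, Module.Basis.prod_apply, Sum.elim_inl, Function.comp_apply,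
      Module.Basis.singleton_apply]
    show ψ _ = x
    rw [hψ]
    simp
  have hB2 : ∀ i, B (Sum.inr i) = (b i : 𝓞 K) := fun i => by
    simp only [B, Module.Basis.map_apply, Module.Basis.prod_apply, Sum.elim_inr, Function.comp_apply]
    show ψ _ = _
    rw [hψ]
    simp
  -- trace compatibility with the field trace
  have htm : ∀ y : 𝓞 K, Algebra.trace ℚ K (algebraMap (𝓞 K) K y) = (((Algebra.trace ℤ (𝓞 K)) y : ℤ) : ℚ) := fun y => by
    have h := Algebra.trace_localization (Rₘ := ℚ) (Sₘ := K) ℤ (nonZeroDivisors ℤ) y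
    simpa using h
  set eK : Unit ⊕ Fin (n - 1) → K := fun i => algebraMap (𝓞 K) K (B i) with heK
  have hMe : (Algebra.traceMatrix ℚ eK).det = ((NumberField.discr K : ℤ) : ℚ) := by
    have h1 : Algebra.traceMatrix ℚ eK = (Algebra.traceMatrix ℤ ⇑B).map (Int.castRingHom ℚ) := by
      ext i j
      simp only [Algebra.traceMatrix_apply, Algebra.traceForm_apply, Matrix.map_apply, heK,
        ← map_mul, Int.coe_castRingHom]
      exact htm _
    rw [h1, ← RingHom.mapMatrix_apply, ← RingHom.map_det]
    have h2 : (Algebra.traceMatrix ℤ ⇑B).det = NumberField.discr K := by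
      rw [← Algebra.discr_def]
      exact discr_eq_discr K B
    rw [h2]
    simp
  -- trace of 1 over ℤ
  have htr1 : (Algebra.trace ℤ (𝓞 K)) (1 : 𝓞 K) = (n : ℤ) := by
    have h1 : (1 : 𝓞 K) = algebraMap ℤ (𝓞 K) 1 := by simp
    rw [h1, Algebra.trace_algebraMap, nsmul_eq_mul, mul_one,
      NumberField.RingOfIntegers.rank, hdeg]
  -- the trace-zero element k•1 - n•x
  have hw0 : (Algebra.trace ℤ (𝓞 K)) ((k : ℤ) • (1 : 𝓞 K) - (n : ℤ) • x) = 0 := by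
    rw [map_sub, map_smul, map_smul, htr1, hx, smul_eq_mul, smul_eq_mul, mul_comm, sub_self]
  set w : LinearMap.ker (Algebra.trace ℤ (𝓞 K)) := ⟨_, LinearMap.mem_ker.mpr hw0⟩ with hwdef
  have hwsum : (k : ℤ) • (1 : 𝓞 K) - (n : ℤ) • x = ∑ i, b.repr w i • (b i : 𝓞 K) := by
    have h1 := congrArg (Submodule.subtype (LinearMap.ker (Algebra.trace ℤ (𝓞 K)))) (b.sum_repr w)
    simp only [map_sum, map_smul, Submodule.coe_subtype] at h1
    exact h1.symm
  have hkey : (n : K) * algebraMap (𝓞 K) K x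
      + ∑ j, ((b.repr w j : ℤ) : K) * algebraMap (𝓞 K) K (b j) = (k : K) := by
    have h1 := congrArg (algebraMap (𝓞 K) K) hwsum
    simp only [map_sub, map_sum, map_zsmul, zsmul_eq_mul, map_one, map_mul, map_intCast, map_natCast,
      Int.cast_natCast, mul_one] at h1
    linear_combination -h1
  set P : Matrix (Unit ⊕ Fin (n - 1)) (Unit ⊕ Fin (n - 1)) ℚ :=
    Matrix.fromBlocks (Matrix.of fun _ _ => (n : ℚ) / k)
      (Matrix.of fun _ j => (b.repr w j : ℚ) / k) 0 1 with hP
  set cK : Unit ⊕ Fin (n - 1) → K := Sum.elim (fun _ => (1 : K)) (fun i => algebraMap (𝓞 K) K (b i)) with hcK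
  have hkK : (k : K) ≠ 0 := Nat.cast_ne_zero.mpr hk.ne'
  have hPc : Matrix.mulVec (P.map (algebraMap ℚ K)) eK = cK := by
    funext i
    cases i with
    | inl u =>
      simp only [Matrix.mulVec, dotProduct, Fintype.sum_sum_type, hP, heK, hcK,
        Matrix.map_apply, Matrix.fromBlocks_apply₁₁, Matrix.fromBlocks_apply₁₂,
        Matrix.of_apply, Sum.elim_inl, Fintype.sum_unique]
      rw [show (Sum.inl default : Unit ⊕ Fin (n - 1)) = Sum.inl () from rfl, hB1,
        Finset.sum_congr rfl fun j _ => by rw [hB2 j]]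
      have hr : ∀ q : ℚ, algebraMap ℚ K q = (q : K) := fun q => eq_ratCast _ q
      simp only [hr]
      push_cast
      simp only [div_mul_eq_mul_div, ← Finset.sum_div, ← add_div]
      rw [div_eq_one_iff_eq hkK]
      exact hkey
    | inr i =>
      simp only [Matrix.mulVec, dotProduct, Fintype.sum_sum_type, hP, heK, hcK,
        Matrix.map_apply, Matrix.fromBlocks_apply₂₁, Matrix.fromBlocks_apply₂₂,
        Matrix.of_apply, Sum.elim_inr, Fintype.sum_unique, Matrix.zero_apply, map_zero,
        zero_mul, zero_add, Matrix.one_apply]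
      simp [apply_ite (algebraMap ℚ K), Finset.sum_ite_eq, hB2]
  have hG : Algebra.traceMatrix ℚ cK =
      Matrix.fromBlocks (Matrix.of fun _ _ => (n : ℚ)) 0 0 (D.map (Int.cast : ℤ → ℚ)) := by
    ext i j
    cases i with
    | inl u =>
      cases j with
      | inl v =>
        simp only [Algebra.traceMatrix_apply, Algebra.traceForm_apply, hcK, Sum.elim_inl,
          mul_one, Matrix.fromBlocks_apply₁₁, Matrix.of_apply]
        have h1 : (1 : K) = algebraMap ℚ K 1 := by simp
        rw [h1, Algebra.trace_algebraMap, hdeg]; simp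
      | inr j =>
        simp only [Algebra.traceMatrix_apply, Algebra.traceForm_apply, hcK, Sum.elim_inl,
          Sum.elim_inr, one_mul, Matrix.fromBlocks_apply₁₂, Matrix.zero_apply]
        rw [htm, LinearMap.mem_ker.mp (b j).2]; simp
    | inr i =>
      cases j with
      | inl v =>
        simp only [Algebra.traceMatrix_apply, Algebra.traceForm_apply, hcK, Sum.elim_inl,
          Sum.elim_inr, mul_one, Matrix.fromBlocks_apply₂₁, Matrix.zero_apply]
        rw [htm, LinearMap.mem_ker.mp (b i).2]; simp
      | inr j =>
        simp only [Algebra.traceMatrix_apply, Algebra.traceForm_apply, hcK, Sum.elim_inr,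
          Matrix.fromBlocks_apply₂₂, Matrix.map_apply, hD, Matrix.of_apply, ← map_mul]
        rw [htm]
  have hmain : (Algebra.traceMatrix ℚ cK).det = P.det ^ 2 * (Algebra.traceMatrix ℚ eK).det := by
    rw [← hPc, Algebra.traceMatrix_of_matrix_mulVec, Matrix.det_mul, Matrix.det_mul,
      Matrix.det_transpose]
    ring
  have hdetP : P.det = (n : ℚ) / k := by
    rw [hP, Matrix.det_fromBlocks_zero₂₁, Matrix.det_one, mul_one, Matrix.det_unique,
      Matrix.of_apply]
  have hDmap : (D.map (Int.cast : ℤ → ℚ)).det = ((D.det : ℤ) : ℚ) := by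
    rw [show D.map (Int.cast : ℤ → ℚ) = (Int.castRingHom ℚ).mapMatrix D from rfl,
      ← RingHom.map_det]
    simp
  have hdetG : (Algebra.traceMatrix ℚ cK).det = (n : ℚ) * ((D.det : ℤ) : ℚ) := by
    rw [hG, Matrix.det_fromBlocks_zero₂₁, Matrix.det_unique, Matrix.of_apply, hDmap]
  have heq : (n : ℚ) * ((D.det : ℤ) : ℚ)
      = ((n : ℚ) / k) ^ 2 * ((NumberField.discr K : ℤ) : ℚ) := by
    rw [← hdetG, hmain, hdetP, hMe]
  have hn0 : (n : ℚ) ≠ 0 := Nat.cast_ne_zero.mpr (by omega)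
  have hk0q : (k : ℚ) ≠ 0 := Nat.cast_ne_zero.mpr hk.ne'
  have hfinal : ((D.det : ℤ) : ℚ) = (n : ℚ) / (k : ℚ) ^ 2 * (NumberField.discr K : ℚ) := by
    refine mul_left_cancel₀ hn0 ?_
    rw [heq]
    field_simp
  exact hfinal
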